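/- With X, d, (K_n), (r_n), x₀, g, h, δ as above (X a noncompact locally compact complete separable metric space with compact exhaustion), the metric space (X,δ) is complete, and hence compact; in particular every sequence that eventually leaves every compact subset of (X,d) converges to x₀ in (X,δ). -/

import Mathlib

open Filter Topology

theorem stmt_18 {X : Type*} [MetricSpace X] [CompleteSpace X]
    [TopologicalSpace.SeparableSpace X] [LocallyCompactSpace X] [NoncompactSpace X]
    (K : ℕ → Set X) (hKc : ∀ n, IsCompact (K n))
    (hKmono : ∀ n, K n ⊆ interior (K (n + 1))) (hKunion : (⋃ n, K n) = Set.univ)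
    (r : ℕ → ℝ) (hr : StrictAnti r) (hrpos : ∀ n, 0 < r n)
    (hrlim : Tendsto r atTop (𝓝 0))
    (hnbhd : ∀ n, {x : X | ∃ v ∈ K n, dist x v < r n} ⊆ K (n + 1))
    (x₀ : X) (hx₀ : x₀ ∈ K 0)
    (g : X → ℝ)
    (hg : ∀ x : X, ∃ n : ℕ, g x = r n - Metric.infDist x (K n) ∧
      ∀ m : ℕ, r m - Metric.infDist x (K m) ≤ g x)
    (h : X → ℝ) (hh : ∀ x, h x = min (dist x x₀) (g x))
    (δ : X → X → ℝ) (hδ : ∀ x y, δ x y = min (dist x y) (h x + h y)) :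
    (∀ u : ℕ → X,
        (∀ ε : ℝ, 0 < ε → ∃ N : ℕ, ∀ m ≥ N, ∀ n ≥ N, δ (u m) (u n) < ε) →
        ∃ x : X, Tendsto (fun n => δ (u n) x) atTop (𝓝 0)) ∧
    (∀ u : ℕ → X, ∃ x : X, ∃ φ : ℕ → ℕ, StrictMono φ ∧
        Tendsto (fun n => δ (u (φ n)) x) atTop (𝓝 0)) ∧
    (∀ u : ℕ → X, (∀ C : Set X, IsCompact C → ∀ᶠ n in atTop, u n ∉ C) →
        Tendsto (fun n => δ (u n) x₀) atTop (𝓝 0)) := by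
  -- Basic facts
  have hKsub : Monotone K := monotone_nat_of_le_succ fun n => (hKmono n).trans interior_subset
  have hKne : ∀ n, (K n).Nonempty := fun n => ⟨x₀, hKsub (Nat.zero_le n) hx₀⟩
  have hgpos : ∀ x, 0 < g x := by
    intro x
    have hx : x ∈ ⋃ n, K n := hKunion ▸ Set.mem_univ x
    obtain ⟨m, hm⟩ := Set.mem_iUnion.mp hx
    obtain ⟨n, -, hmax⟩ := hg x
    have := hmax m
    rw [Metric.infDist_zero_of_mem hm] at this
    linarith [hrpos m]
  have hh0 : ∀ x, 0 ≤ h x := by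
    intro x; rw [hh]; exact le_min dist_nonneg (hgpos x).le
  have hhx₀ : h x₀ = 0 := by
    rw [hh, dist_self]; exact min_eq_left (hgpos x₀).le
  have hδ0 : ∀ x y, 0 ≤ δ x y := by
    intro x y; rw [hδ]; exact le_min dist_nonneg (add_nonneg (hh0 x) (hh0 y))
  have hglip : ∀ x y, g x ≤ g y + dist x y := by
    intro x y
    obtain ⟨n, heq, -⟩ := hg x
    obtain ⟨ny, -, hymax⟩ := hg y
    have hi : Metric.infDist y (K n) ≤ Metric.infDist x (K n) + dist y x :=
      Metric.infDist_le_infDist_add_dist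
    have := hymax n
    rw [dist_comm y x] at hi
    rw [heq]
    linarith
  have hhlip : ∀ x y, h x ≤ h y + dist x y := by
    intro x y
    rw [hh, hh]
    rcases le_total (dist y x₀) (g y) with hc | hc
    · rw [min_eq_left hc]
      exact le_trans (min_le_left _ _) (by linarith [dist_triangle x y x₀])
    · rw [min_eq_right hc]
      exact le_trans (min_le_right _ _) (by linarith [hglip x y])
  have hδtri : ∀ x y z, δ x z ≤ δ x y + δ y z := by
    intro x y z
    rw [hδ, hδ, hδ]
    have t := dist_triangle x y z
    have l1 : h x ≤ h y + dist x y := hhlip x y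
    have l2 : h z ≤ h y + dist y z := by
      have := hhlip z y; rwa [dist_comm] at this
    have n1 := hh0 y
    rcases le_total (dist x y) (h x + h y) with h₁ | h₁ <;>
      rcases le_total (dist y z) (h y + h z) with h₂ | h₂
    · rw [min_eq_left h₁, min_eq_left h₂]
      exact le_trans (min_le_left _ _) t
    · rw [min_eq_left h₁, min_eq_right h₂]
      have := min_le_right (dist x z) (h x + h z); linarith
    · rw [min_eq_right h₁, min_eq_left h₂]
      have := min_le_right (dist x z) (h x + h z); linarith
    · rw [min_eq_right h₁, min_eq_right h₂]
      have := min_le_right (dist x z) (h x + h z); linarith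
  have hgsmall : ∀ (N : ℕ) (x : X), x ∉ K (N + 1) → g x ≤ r (N + 1) := by
    intro N x hx
    obtain ⟨n, heq, -⟩ := hg x
    rcases le_or_gt n N with hn | hn
    · -- x ∉ K (n+1), so infDist x (K n) ≥ r n
      have hxn : x ∉ K (n + 1) := fun hmem => hx (hKsub (by omega) hmem)
      have hid : r n ≤ Metric.infDist x (K n) := by
        by_contra hcon
        push_neg at hcon
        obtain ⟨v, hv, hvd⟩ := (hKc n).exists_infDist_eq_dist (hKne n) x
        have : dist x v < r n := by rw [← hvd]; exact hcon
        exact hxn (hnbhd n ⟨v, hv, this⟩)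
      rw [heq]
      linarith [hrpos (N + 1)]
    · have h1 : r n ≤ r (N + 1) := hr.antitone (by omega)
      have h2 : 0 ≤ Metric.infDist x (K n) := Metric.infDist_nonneg
      rw [heq]; linarith
  have hCsub : ∀ C : Set X, IsCompact C → ∃ m, C ⊆ K m := by
    intro C hC
    have hcover : C ⊆ ⋃ n, interior (K n) := by
      intro x _
      have hx : x ∈ ⋃ n, K n := hKunion ▸ Set.mem_univ x
      obtain ⟨n, hn⟩ := Set.mem_iUnion.mp hx
      exact Set.mem_iUnion.mpr ⟨n + 1, hKmono n hn⟩
    obtain ⟨t, ht⟩ := hC.elim_finite_subcover (fun n => interior (K n))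
      (fun n => isOpen_interior) hcover
    refine ⟨t.sup id, fun x hx => ?_⟩
    obtain ⟨n, hn, hxn⟩ := Set.mem_iUnion₂.mp (ht hx)
    exact hKsub (Finset.le_sup (f := id) hn) (interior_subset hxn)
  -- Part 3
  have part3 : ∀ u : ℕ → X, (∀ C : Set X, IsCompact C → ∀ᶠ n in atTop, u n ∉ C) →
      Tendsto (fun n => δ (u n) x₀) atTop (𝓝 0) := by
    intro u hu
    rw [Metric.tendsto_atTop]
    intro ε hε
    have h1 : ∀ᶠ n in atTop, r n < ε := hrlim.eventually (gt_mem_nhds hε)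
    obtain ⟨N, hN⟩ := Filter.eventually_atTop.mp h1
    obtain ⟨M, hM⟩ := Filter.eventually_atTop.mp (hu (K (N + 1)) (hKc (N + 1)))
    refine ⟨M, fun n hn => ?_⟩
    have hout := hM n hn
    calc dist (δ (u n) x₀) 0 = δ (u n) x₀ := by
          rw [Real.dist_0_eq_abs, abs_of_nonneg (hδ0 _ _)]
      _ ≤ h (u n) + h x₀ := by rw [hδ]; exact min_le_right _ _
      _ = h (u n) := by rw [hhx₀, add_zero]
      _ ≤ g (u n) := by rw [hh]; exact min_le_right _ _
      _ ≤ r (N + 1) := hgsmall N (u n) hout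
      _ < ε := hN (N + 1) (Nat.le_succ N)
  -- Part 2
  have part2 : ∀ u : ℕ → X, ∃ x : X, ∃ φ : ℕ → ℕ, StrictMono φ ∧
      Tendsto (fun n => δ (u (φ n)) x) atTop (𝓝 0) := by
    intro u
    by_cases hcase : ∃ m, ∃ᶠ n in atTop, u n ∈ K m
    · obtain ⟨m, hm⟩ := hcase
      obtain ⟨φ, hφ, hφK⟩ := Filter.extraction_of_frequently_atTop hm
      obtain ⟨x, -, ψ, hψ, hconv⟩ := (hKc m).tendsto_subseq hφK
      refine ⟨x, φ ∘ ψ, hφ.comp hψ, ?_⟩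
      have hd : Tendsto (fun n => dist (u (φ (ψ n))) x) atTop (𝓝 0) :=
        tendsto_iff_dist_tendsto_zero.mp hconv
      refine squeeze_zero (fun n => hδ0 _ _) (fun n => ?_) hd
      rw [hδ]; exact min_le_left _ _
    · push_neg at hcase
      have hleave : ∀ C : Set X, IsCompact C → ∀ᶠ n in atTop, u n ∉ C := by
        intro C hC
        obtain ⟨m, hCm⟩ := hCsub C hC
        have := (hcase m)
        filter_upwards [this] with n hn hnC
        exact hn (hCm hnC)
      exact ⟨x₀, id, strictMono_id, part3 u hleave⟩
  refine ⟨?_, part2, part3⟩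
  -- Part 1
  intro u hu
  obtain ⟨x, φ, hφ, hconv⟩ := part2 u
  refine ⟨x, ?_⟩
  rw [Metric.tendsto_atTop] at hconv ⊢
  intro ε hε
  obtain ⟨N₁, hN₁⟩ := hu (ε / 2) (by linarith)
  obtain ⟨N₂, hN₂⟩ := hconv (ε / 2) (by linarith)
  refine ⟨max N₁ N₂, fun n hn => ?_⟩
  have hn1 : n ≥ N₁ := le_trans (le_max_left _ _) hn
  have hn2 : n ≥ N₂ := le_trans (le_max_right _ _) hn
  have hφn : φ n ≥ N₁ := le_trans hn1 hφ.le_apply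
  have h1 : δ (u n) (u (φ n)) < ε / 2 := hN₁ n hn1 (φ n) hφn
  have h2 : δ (u (φ n)) x < ε / 2 := by
    have := hN₂ n hn2
    rwa [Real.dist_0_eq_abs, abs_of_nonneg (hδ0 _ _)] at this
  have htr := hδtri (u n) (u (φ n)) x
  rw [Real.dist_0_eq_abs, abs_of_nonneg (hδ0 _ _)]
  linarith
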